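/- Let D ∈ ℝ^{n×n} be symmetric positive semidefinite with range L, ker(D P_L) = L^⊥, and suppose all nonzero eigenvalues of D are ≥ ρ > 0. Then for every z ∈ ℝ^n, λ_m |P_L z|² ≤ zᵀ D^{BD} z ≤ λ_M |P_L z|², where λ_m = (1 + n‖D‖_F)^{−1} and λ_M = max{1, ρ^{−1}}, and ‖D‖_F is the Frobenius norm of D. -/

import Mathlib

open Matrix

set_option maxHeartbeats 1000000 in
theorem bottDuffin_quadratic_bounds (n : ℕ) (D P Q : Matrix (Fin n) (Fin n) ℝ)
    (L : Submodule ℝ (Fin n → ℝ)) (ρ : ℝ) (hρ : 0 < ρ)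
    (hDsymm : Dᵀ = D) (hDpsd : D.PosSemidef)
    -- `P` is the orthogonal projection onto `L`:
    (hPsymm : Pᵀ = P) (hPidem : P * P = P)
    (hPrange : ∀ x : Fin n → ℝ, P.mulVec x ∈ L)
    (hPfix : ∀ x ∈ L, P.mulVec x = x)
    -- `Q` is the orthogonal projection onto `L^⊥`:
    (hQ : Q = 1 - P)
    -- `ran D = L`:
    (hranD : LinearMap.range D.mulVecLin = L)
    -- `ker (D P) = L^⊥`:
    (hker : ∀ x : Fin n → ℝ, (D * P).mulVec x = 0 ↔ ∀ y ∈ L, y ⬝ᵥ x = 0)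
    -- all nonzero eigenvalues of `D` are `≥ ρ`:
    (heig : ∀ μ : ℝ, Module.End.HasEigenvalue (Matrix.toLin' D) μ → μ ≠ 0 → ρ ≤ μ) :
    ∀ z : Fin n → ℝ,
      (1 + n * Real.sqrt (∑ i, ∑ j, D i j ^ 2))⁻¹ * (∑ i, (P.mulVec z i) ^ 2) ≤
          z ⬝ᵥ (P * (D * P + Q)⁻¹).mulVec z ∧
      z ⬝ᵥ (P * (D * P + Q)⁻¹).mulVec z ≤
          max 1 ρ⁻¹ * (∑ i, (P.mulVec z i) ^ 2) := by
  intro z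
  classical
  -- `P * D = D` since the range of `D` is `L`
  have hPD : P * D = D := by
    apply Matrix.toLin'.injective
    apply LinearMap.ext
    intro x
    have hmem : D.mulVec x ∈ L := by
      rw [← hranD]; exact ⟨x, rfl⟩
    simp only [Matrix.toLin'_apply, ← Matrix.mulVec_mulVec]
    exact hPfix _ hmem
  have hDP : D * P = D := by
    have := congrArg Matrix.transpose hPD
    rwa [Matrix.transpose_mul, hDsymm, hPsymm] at this
  set M : Matrix (Fin n) (Fin n) ℝ := D * P + Q with hM
  have hMsymm : Mᵀ = M := by
    rw [hM, hQ, Matrix.transpose_add, Matrix.transpose_sub, Matrix.transpose_one, hPsymm, hDP,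
      hDsymm]
  have hMherm : M.IsHermitian := by
    rwa [Matrix.IsHermitian, Matrix.conjTranspose_eq_transpose_of_trivial]
  have hQsq : Q * Q = Q := by
    simp only [hQ, mul_sub, sub_mul, one_mul, mul_one, hPidem]
    rw [sub_self, sub_zero]
  have hQsymm : Qᵀ = Q := by
    rw [hQ, Matrix.transpose_sub, Matrix.transpose_one, hPsymm]
  -- `M` is positive definite
  have hMpd : M.PosDef := by
    refine Matrix.PosDef.of_dotProduct_mulVec_pos hMherm fun x hx => ?_
    have hstar : (star x : Fin n → ℝ) = x := by simp
    rw [hstar]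
    have hsplit : x ⬝ᵥ M *ᵥ x = x ⬝ᵥ D *ᵥ x + (Q *ᵥ x) ⬝ᵥ (Q *ᵥ x) := by
      have : x ⬝ᵥ Q *ᵥ x = (Q *ᵥ x) ⬝ᵥ (Q *ᵥ x) := by
        conv_lhs => rw [← hQsq, ← Matrix.mulVec_mulVec, Matrix.dotProduct_mulVec,
          ← Matrix.mulVec_transpose, hQsymm]
      rw [hM, hDP, Matrix.add_mulVec, dotProduct_add, this]
    have hD0 : 0 ≤ x ⬝ᵥ D *ᵥ x := by
      have := hDpsd.dotProduct_mulVec_nonneg x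
      simpa using this
    have hQ0 : 0 ≤ (Q *ᵥ x) ⬝ᵥ (Q *ᵥ x) := by
      exact Finset.sum_nonneg fun i _ => mul_self_nonneg _
    rcases lt_or_eq_of_le (add_nonneg hD0 hQ0) with h | h
    · rw [hsplit]; exact h
    · exfalso
      have hDx0 : x ⬝ᵥ D *ᵥ x = 0 := le_antisymm (by linarith) hD0
      have hQx0 : (Q *ᵥ x) ⬝ᵥ (Q *ᵥ x) = 0 := le_antisymm (by linarith) hQ0
      have hDx : D *ᵥ x = 0 :=
        (hDpsd.dotProduct_mulVec_zero_iff x).mp (by simpa using hDx0)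
      have hQx : Q *ᵥ x = 0 := dotProduct_self_eq_zero.mp hQx0
      have hPx : P *ᵥ x = x := by
        have h2 : (1 - P) *ᵥ x = 0 := by rw [← hQ]; exact hQx
        have h1 : x - P *ᵥ x = 0 := by
          rwa [Matrix.sub_mulVec, Matrix.one_mulVec] at h2
        exact (sub_eq_zero.mp h1).symm
      have hxL : x ∈ L := hPx ▸ hPrange x
      have hk : (D * P) *ᵥ x = 0 := by
        rw [← Matrix.mulVec_mulVec, hPx, hDx]
      exact hx (dotProduct_self_eq_zero.mp ((hker x).mp hk x hxL))
  have hdet : IsUnit M.det := hMpd.det_pos.ne'.isUnit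
  have hMN : M * M⁻¹ = 1 := Matrix.mul_nonsing_inv M hdet
  have hNM : M⁻¹ * M = 1 := Matrix.nonsing_inv_mul M hdet
  have hNsymm : (M⁻¹)ᵀ = M⁻¹ := by
    rw [Matrix.transpose_nonsing_inv, hMsymm]
  -- `M * P = D` and `P * M = D`
  have hQP : Q * P = 0 := by rw [hQ, sub_mul, one_mul, hPidem, sub_self]
  have hPQ : P * Q = 0 := by rw [hQ, mul_sub, mul_one, hPidem, sub_self]
  have hMP : M * P = D := by
    rw [hM, add_mul, mul_assoc, hPidem, hDP, hQP, add_zero]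
  have hPM : P * M = D := by
    rw [hM, mul_add, ← mul_assoc, hPD, hDP, hPQ, add_zero]
  have hPN : P * M⁻¹ = M⁻¹ * (D * M⁻¹) := by
    rw [← mul_assoc, ← hMP, ← mul_assoc, hNM, one_mul]
  set w : Fin n → ℝ := M⁻¹ *ᵥ z with hw
  have hzw : M *ᵥ w = z := by
    rw [hw, Matrix.mulVec_mulVec, hMN, Matrix.one_mulVec]
  -- the quadratic form equals `w ⬝ᵥ D w`
  have hform : z ⬝ᵥ (P * M⁻¹) *ᵥ z = w ⬝ᵥ D *ᵥ w := by
    rw [hPN, ← Matrix.mulVec_mulVec, Matrix.dotProduct_mulVec, ← Matrix.mulVec_transpose,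
      hNsymm, ← hw, ← Matrix.mulVec_mulVec, ← hw]
  -- `P z = D w`
  have hPz : P *ᵥ z = D *ᵥ w := by
    rw [← hzw, Matrix.mulVec_mulVec, hPM]
  -- spectral decomposition of `D`
  have hH : D.IsHermitian := hDpsd.1
  set U : Matrix (Fin n) (Fin n) ℝ := (hH.eigenvectorUnitary : Matrix (Fin n) (Fin n) ℝ)
    with hU
  set μ : Fin n → ℝ := hH.eigenvalues with hμ
  have hUU : star U * U = 1 := mem_unitaryGroup_iff'.mp hH.eigenvectorUnitary.2
  have hspec : D = U * Matrix.diagonal μ * star U := by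
    have h := hH.spectral_theorem
    rwa [RCLike.ofReal_real_eq_id, Function.id_comp] at h
  have hUt : Uᵀ = star U := by
    rw [← Matrix.conjTranspose_eq_transpose_of_trivial]
    rfl
  set v : Fin n → ℝ := star U *ᵥ w with hv
  have key1 : w ⬝ᵥ D *ᵥ w = ∑ i, μ i * v i ^ 2 := by
    conv_lhs => rw [hspec, ← Matrix.mulVec_mulVec, ← Matrix.mulVec_mulVec,
      Matrix.dotProduct_mulVec, ← Matrix.mulVec_transpose, hUt, ← hv]
    simp only [dotProduct, Matrix.mulVec_diagonal]
    exact Finset.sum_congr rfl fun i _ => by ring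
  have hDw : D *ᵥ w = U *ᵥ (fun i => μ i * v i) := by
    have hdv : Matrix.diagonal μ *ᵥ v = fun i => μ i * v i :=
      funext fun i => Matrix.mulVec_diagonal μ v i
    rw [hspec, ← Matrix.mulVec_mulVec, ← Matrix.mulVec_mulVec, ← hv, hdv]
  have key2 : (D *ᵥ w) ⬝ᵥ (D *ᵥ w) = ∑ i, μ i ^ 2 * v i ^ 2 := by
    rw [hDw, Matrix.dotProduct_mulVec, ← Matrix.mulVec_transpose, hUt,
      Matrix.mulVec_mulVec, hUU, Matrix.one_mulVec]
    simp only [dotProduct]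
    exact Finset.sum_congr rfl fun i _ => by ring
  -- the sum of squared eigenvalues equals the squared Frobenius norm
  set S : ℝ := ∑ i, ∑ j, D i j ^ 2 with hS
  have hS0 : 0 ≤ S :=
    Finset.sum_nonneg fun i _ => Finset.sum_nonneg fun j _ => sq_nonneg _
  have htrace : ∑ i, μ i ^ 2 = S := by
    have h1 : D * D = U * Matrix.diagonal (fun i => μ i * μ i) * star U := by
      rw [hspec]
      rw [show U * Matrix.diagonal μ * star U * (U * Matrix.diagonal μ * star U)
          = U * (Matrix.diagonal μ * (star U * U) * Matrix.diagonal μ) * star U by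
        simp only [mul_assoc]]
      rw [hUU, mul_one, Matrix.diagonal_mul_diagonal]
    have h2 : (D * D).trace = ∑ i, μ i ^ 2 := by
      rw [h1, Matrix.trace_mul_cycle, hUU, one_mul, Matrix.trace_diagonal]
      exact Finset.sum_congr rfl fun i _ => (sq (μ i)).symm
    have h3 : (D * D).trace = S := by
      rw [hS, Matrix.trace]
      refine Finset.sum_congr rfl fun i _ => ?_
      simp only [Matrix.diag_apply, Matrix.mul_apply]
      refine Finset.sum_congr rfl fun j _ => ?_
      have hji : D j i = D i j := congrFun (congrFun hDsymm i) j
      rw [hji]; ring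
    rw [← h2, h3]
  -- eigenvalue bounds
  have heig_nonneg : ∀ i, 0 ≤ μ i := fun i => hDpsd.eigenvalues_nonneg i
  have heig_sqrt : ∀ i, μ i ≤ Real.sqrt S := by
    intro i
    rw [Real.le_sqrt (heig_nonneg i) hS0]
    calc μ i ^ 2 ≤ ∑ j, μ j ^ 2 :=
          Finset.single_le_sum (fun j _ => sq_nonneg (μ j)) (Finset.mem_univ i)
      _ = S := htrace
  have hc1 : (1 : ℝ) ≤ 1 + n * Real.sqrt S := by
    have : (0:ℝ) ≤ n * Real.sqrt S := by positivity
    linarith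
  have hc0 : (0 : ℝ) < 1 + n * Real.sqrt S := lt_of_lt_of_le one_pos hc1
  have heig_upper : ∀ i : Fin n, μ i ≤ 1 + n * Real.sqrt S := by
    intro i
    have hn : (1 : ℝ) ≤ n := by
      exact_mod_cast Nat.one_le_iff_ne_zero.mpr (Fin.pos i).ne'
    have := heig_sqrt i
    nlinarith [Real.sqrt_nonneg S]
  have heig_rho : ∀ i, μ i ≠ 0 → ρ ≤ μ i := by
    intro i hne
    apply heig _ _ hne
    have hvec := hH.mulVec_eigenvectorBasis i
    have hnz : (⇑(hH.eigenvectorBasis i) : Fin n → ℝ) ≠ 0 := by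
      intro h0
      exact hH.eigenvectorBasis.orthonormal.ne_zero i (by ext j; exact congrFun h0 j)
    refine Module.End.hasEigenvalue_of_hasEigenvector
      (x := (⇑(hH.eigenvectorBasis i) : Fin n → ℝ)) ⟨?_, hnz⟩
    rw [Module.End.mem_eigenspace_iff, Matrix.toLin'_apply]
    exact hvec
  -- assemble
  have hsum : ∑ i, (P *ᵥ z) i ^ 2 = ∑ i, μ i ^ 2 * v i ^ 2 := by
    rw [← key2, hPz, dotProduct]
    exact Finset.sum_congr rfl fun i _ => (sq _)
  clear_value M w U μ v S
  rw [hform, hsum, key1]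
  constructor
  · rw [inv_mul_le_iff₀ hc0]
    calc ∑ i, μ i ^ 2 * v i ^ 2
        ≤ ∑ i, (1 + n * Real.sqrt S) * (μ i * v i ^ 2) := by
          refine Finset.sum_le_sum fun i _ => ?_
          have h1 := heig_upper i
          have h2 := heig_nonneg i
          nlinarith [mul_nonneg (mul_nonneg (sub_nonneg.mpr h1) h2) (sq_nonneg (v i))]
      _ = (1 + n * Real.sqrt S) * ∑ i, μ i * v i ^ 2 := by
          rw [Finset.mul_sum]
  · have hstep : ∑ i, μ i * v i ^ 2 ≤ ρ⁻¹ * ∑ i, μ i ^ 2 * v i ^ 2 := by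
      rw [Finset.mul_sum]
      refine Finset.sum_le_sum fun i _ => ?_
      by_cases h : μ i = 0
      · simp [h]
      · have h1 := heig_rho i h
        have h2 := heig_nonneg i
        rw [le_inv_mul_iff₀ hρ]
        nlinarith [mul_nonneg (mul_nonneg h2 (sub_nonneg.mpr h1)) (sq_nonneg (v i))]
    refine hstep.trans ?_
    apply mul_le_mul_of_nonneg_right (le_max_right 1 ρ⁻¹)
    exact Finset.sum_nonneg fun i _ => mul_nonneg (sq_nonneg _) (sq_nonneg _)
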